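/- Logarithmic lower bound on branch weight (the heaviest-subtree pumping bound): let S be a finite ternary tree, J ⊆ S a nonempty set of jump nodes, and k a natural number with 4^k ≤ |J|. Then there exists a position ℓ ∈ S such that at least k prefixes v of ℓ with v ∈ S are weighted (i.e., v ∈ J or at least two children of v are active). -/
import Mathlib


/-- A node `v` is *active* (w.r.t. the set `J` of jump nodes) if some jump node has `v` as a
prefix, i.e. the subtree rooted at `v` contains a jump. -/
def Active (J : Set (List (Fin 3))) (v : List (Fin 3)) : Prop :=
  ∃ j ∈ J, v <+: j

/-- A node `v` is *weighted* (w.r.t. the jump set `J`) if `v` is itself a jump node or at least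
two of its children are active. -/
def Weighted (J : Set (List (Fin 3))) (v : List (Fin 3)) : Prop :=
  v ∈ J ∨ ∃ d₁ d₂ : Fin 3, d₁ ≠ d₂ ∧ Active J (v ++ [d₁]) ∧ Active J (v ++ [d₂])

/-- The set of jump nodes in the subtree rooted at `v`. -/
def jumpsAt (J : Set (List (Fin 3))) (v : List (Fin 3)) : Set (List (Fin 3)) :=
  {j ∈ J | v <+: j}

lemma jumpsAt_subset (J : Set (List (Fin 3))) (v : List (Fin 3)) : jumpsAt J v ⊆ J :=
  fun _ h => h.1

/-- Descend from an active node to a weighted node having the same jumps in its subtree. -/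
lemma descend (J : Set (List (Fin 3))) :
    ∀ n : ℕ, ∀ v j₀ : List (Fin 3), j₀ ∈ J → v <+: j₀ → j₀.length - v.length ≤ n →
      ∃ w, v <+: w ∧ w <+: j₀ ∧ Weighted J w ∧ jumpsAt J v = jumpsAt J w := by
  intro n
  induction n with
  | zero =>
    intro v j₀ hj₀ hpre hlen
    have : v = j₀ := List.IsPrefix.eq_of_length hpre (by
      have := hpre.length_le; omega)
    subst this
    exact ⟨v, List.prefix_refl v, List.prefix_refl v, Or.inl hj₀, rfl⟩
  | succ n ih =>
    intro v j₀ hj₀ hpre hlen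
    by_cases hw : Weighted J v
    · exact ⟨v, List.prefix_refl v, hpre, hw, rfl⟩
    · have hvJ : v ∉ J := fun h => hw (Or.inl h)
      have hne : v ≠ j₀ := fun h => hvJ (h ▸ hj₀)
      obtain ⟨u, rfl⟩ := hpre
      have hune : u ≠ [] := fun h => hne (by simp [h])
      obtain ⟨d₀, u', rfl⟩ := List.exists_cons_of_ne_nil hune
      -- every jump below v goes through child d₀
      have hkey : ∀ j ∈ J, v <+: j → v ++ [d₀] <+: j := by
        intro j hj hvj
        obtain ⟨t, rfl⟩ := hvj
        have htne : t ≠ [] := fun h => hvJ (by simpa [h] using hj)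
        obtain ⟨d, t', rfl⟩ := List.exists_cons_of_ne_nil htne
        by_cases hd : d = d₀
        · subst hd
          exact ⟨t', by simp⟩
        · exfalso
          apply hw
          exact Or.inr ⟨d, d₀, hd,
            ⟨v ++ d :: t', hj, ⟨t', by simp⟩⟩,
            ⟨v ++ d₀ :: u', hj₀, ⟨u', by simp⟩⟩⟩
      have hpre' : v ++ [d₀] <+: v ++ d₀ :: u' := ⟨u', by simp⟩
      obtain ⟨w, h1, h2, h3, h4⟩ := ih (v ++ [d₀]) (v ++ d₀ :: u') hj₀ hpre' (by
        simp only [List.length_append, List.length_cons, List.length_singleton] at hlen ⊢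
        omega)
      refine ⟨w, List.IsPrefix.trans ⟨[d₀], rfl⟩ h1, h2, h3, ?_⟩
      rw [← h4]
      ext j
      constructor
      · rintro ⟨hj, hvj⟩
        exact ⟨hj, hkey j hj hvj⟩
      · rintro ⟨hj, hvj⟩
        exact ⟨hj, List.IsPrefix.trans ⟨[d₀], rfl⟩ hvj⟩

lemma prefix_mem (S : Set (List (Fin 3)))
    (hclosed : ∀ (p : List (Fin 3)) (d : Fin 3), p ++ [d] ∈ S → p ∈ S)
    {p q : List (Fin 3)} (hpq : p <+: q) (hq : q ∈ S) : p ∈ S := by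
  obtain ⟨u, rfl⟩ := hpq
  induction u using List.reverseRecOn with
  | nil => simpa using hq
  | append_singleton us d ih =>
    exact ih (hclosed _ d (by simpa [List.append_assoc] using hq))

/-- Main induction. -/
lemma main_ind (S J : Set (List (Fin 3))) (hfin : S.Finite)
    (hclosed : ∀ (p : List (Fin 3)) (d : Fin 3), p ++ [d] ∈ S → p ∈ S)
    (hJS : J ⊆ S) :
    ∀ k : ℕ, ∀ v ∈ S, 4 ^ k ≤ (jumpsAt J v).ncard →
      ∃ ℓ ∈ S, v <+: ℓ ∧
        k ≤ { u : List (Fin 3) | u ∈ S ∧ v <+: u ∧ u <+: ℓ ∧ Weighted J u }.ncard := by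
  have hJfin : J.Finite := hfin.subset hJS
  intro k
  induction k with
  | zero =>
    intro v hv _
    exact ⟨v, hv, List.prefix_refl v, Nat.zero_le _⟩
  | succ k ih =>
    intro v hv hc
    -- the subtree at v contains a jump
    have hpos : 0 < (jumpsAt J v).ncard := lt_of_lt_of_le (pow_pos (by norm_num) _) hc
    have hne : (jumpsAt J v).Nonempty := Set.nonempty_of_ncard_ne_zero hpos.ne'
    obtain ⟨j₀, hj₀J, hj₀pre⟩ := hne
    obtain ⟨w, hvw, hwj₀, hwW, hsame⟩ :=
      descend J (j₀.length - v.length) v j₀ hj₀J hj₀pre le_rfl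
    have hwS : w ∈ S := prefix_mem S hclosed hwj₀ (hJS hj₀J)
    -- split jumps below w among w itself and its three children
    have hsplit : jumpsAt J w ⊆ {w} ∪ jumpsAt J (w ++ [0]) ∪ jumpsAt J (w ++ [1])
        ∪ jumpsAt J (w ++ [2]) := by
      rintro j ⟨hj, ⟨t, rfl⟩⟩
      rcases t with _ | ⟨d, t'⟩
      · simp
      · fin_cases d
        · exact Or.inl (Or.inl (Or.inr ⟨hj, ⟨t', by simp⟩⟩))
        · exact Or.inl (Or.inr ⟨hj, ⟨t', by simp⟩⟩)
        · exact Or.inr ⟨hj, ⟨t', by simp⟩⟩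
    have hcard : (jumpsAt J w).ncard ≤ 1 + (jumpsAt J (w ++ [0])).ncard
        + (jumpsAt J (w ++ [1])).ncard + (jumpsAt J (w ++ [2])).ncard := by
      calc (jumpsAt J w).ncard
          ≤ ({w} ∪ jumpsAt J (w ++ [0]) ∪ jumpsAt J (w ++ [1])
              ∪ jumpsAt J (w ++ [2])).ncard := by
            refine Set.ncard_le_ncard hsplit ?_
            exact (((Set.finite_singleton w).union (hJfin.subset (jumpsAt_subset J _))).union
              (hJfin.subset (jumpsAt_subset J _))).union (hJfin.subset (jumpsAt_subset J _))
        _ ≤ ({w} ∪ jumpsAt J (w ++ [0]) ∪ jumpsAt J (w ++ [1])).ncard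
              + (jumpsAt J (w ++ [2])).ncard := Set.ncard_union_le _ _
        _ ≤ ({w} ∪ jumpsAt J (w ++ [0])).ncard + (jumpsAt J (w ++ [1])).ncard
              + (jumpsAt J (w ++ [2])).ncard := by
            have := Set.ncard_union_le ({w} ∪ jumpsAt J (w ++ [0])) (jumpsAt J (w ++ [1]))
            omega
        _ ≤ 1 + (jumpsAt J (w ++ [0])).ncard + (jumpsAt J (w ++ [1])).ncard
              + (jumpsAt J (w ++ [2])).ncard := by
            have := Set.ncard_union_le ({w} : Set (List (Fin 3))) (jumpsAt J (w ++ [0]))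
            simp only [Set.ncard_singleton] at this
            omega
    have hcw : 4 ^ (k + 1) ≤ (jumpsAt J w).ncard := hsame ▸ hc
    -- some child gets at least 4^k jumps
    have hchild : ∃ d : Fin 3, 4 ^ k ≤ (jumpsAt J (w ++ [d])).ncard := by
      by_contra hcon
      push_neg at hcon
      have h0 := hcon 0; have h1 := hcon 1; have h2 := hcon 2
      have h4 : 4 ^ (k + 1) = 4 * 4 ^ k := by ring
      have hk1 : 1 ≤ 4 ^ k := Nat.one_le_pow _ _ (by norm_num)
      omega
    obtain ⟨d, hd⟩ := hchild
    have hchildpos : (jumpsAt J (w ++ [d])).Nonempty :=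
      Set.nonempty_of_ncard_ne_zero (lt_of_lt_of_le (pow_pos (by norm_num) k) hd).ne'
    obtain ⟨j₁, hj₁J, hj₁pre⟩ := hchildpos
    have hwdS : w ++ [d] ∈ S := prefix_mem S hclosed hj₁pre (hJS hj₁J)
    obtain ⟨ℓ, hℓS, hℓpre, hℓcard⟩ := ih (w ++ [d]) hwdS hd
    refine ⟨ℓ, hℓS, hvw.trans (List.IsPrefix.trans ⟨[d], rfl⟩ hℓpre), ?_⟩
    -- insert w into the witness set from the IH
    set T := { u : List (Fin 3) | u ∈ S ∧ w ++ [d] <+: u ∧ u <+: ℓ ∧ Weighted J u }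
    have hTfin : T.Finite := hfin.subset (fun u hu => hu.1)
    have hwT : w ∉ T := by
      intro hwmem
      have := hwmem.2.1.length_le
      simp at this
    have hsub : insert w T ⊆ { u : List (Fin 3) | u ∈ S ∧ v <+: u ∧ u <+: ℓ ∧ Weighted J u } := by
      rintro u (rfl | hu)
      · exact ⟨hwS, hvw, List.IsPrefix.trans (⟨[d], rfl⟩ : u <+: u ++ [d]) hℓpre, hwW⟩
      · exact ⟨hu.1, hvw.trans (List.IsPrefix.trans (⟨[d], rfl⟩ : w <+: w ++ [d]) hu.2.1), hu.2.2⟩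
    have hbig : { u : List (Fin 3) | u ∈ S ∧ v <+: u ∧ u <+: ℓ ∧ Weighted J u }.Finite :=
      hfin.subset (fun u hu => hu.1)
    calc k + 1 ≤ T.ncard + 1 := by omega
      _ = (insert w T).ncard := (Set.ncard_insert_of_notMem hwT hTfin).symm
      _ ≤ _ := Set.ncard_le_ncard hsub hbig

theorem exists_branch_with_log_weight (S J : Set (List (Fin 3))) (hfin : S.Finite)
    (hroot : [] ∈ S) (hclosed : ∀ (p : List (Fin 3)) (d : Fin 3), p ++ [d] ∈ S → p ∈ S)
    (hJS : J ⊆ S) (hJne : J.Nonempty) (k : ℕ) (hk : 4 ^ k ≤ J.ncard) :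
    ∃ ℓ ∈ S, k ≤ { v : List (Fin 3) | v ∈ S ∧ v <+: ℓ ∧ Weighted J v }.ncard := by
  have hJroot : jumpsAt J [] = J := by
    ext j; simp [jumpsAt]
  obtain ⟨ℓ, hℓS, _, hcard⟩ := main_ind S J hfin hclosed hJS k [] hroot (by rw [hJroot]; exact hk)
  refine ⟨ℓ, hℓS, le_trans hcard (Set.ncard_le_ncard ?_ (hfin.subset fun u hu => hu.1))⟩
  rintro u ⟨h1, _, h3, h4⟩
  exact ⟨h1, h3, h4⟩
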